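/- arXiv:1507.06396 — 2 statements merged into one kernel-verified Lean document; each statement's English description precedes it below -/
import Mathlib

section
/- Let X and Y be jointly distributed such that conditional on Y = y, X has the noncentral-exponential density f(x|y) = (1/((1-ρ²)γ)) exp(-(x + ρ² y)/((1-ρ²)γ)) I_0(2ρ√(xy)/((1-ρ²)γ)), and Y has density f_Y(y) = Ψ e^{-Φ y} (Ψ, Φ > 0). Then the marginal density of X is f_X(x) = Ξ e^{-Z x}, where Ξ = Ψ / ((1-ρ²)γ (Φ + ρ²/((1-ρ²)γ))) and Z = 1/((1-ρ²)γ) − ρ²/((1-ρ²)²γ² (Φ + ρ²/((1-ρ²)γ))). -/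
open MeasureTheory Real Set
open scoped ENNReal NNReal

/-- The modified Bessel function of the first kind of order zero, via its integral
representation `I₀(z) = (1/π) ∫_0^π e^{z cos θ} dθ`. -/
noncomputable def besselI0 (z : ℝ) : ℝ :=
  (1 / Real.pi) * ∫ θ in (0 : ℝ)..Real.pi, Real.exp (z * Real.cos θ)


lemma aux_cos_pow_odd (k : ℕ) :
    ∫ x in (0:ℝ)..Real.pi, Real.cos x ^ (2*k+1) = 0 := by
  induction k with
  | zero => simp
  | succ k ih =>
    have h := integral_cos_pow (a := 0) (b := Real.pi) (n := 2*k+1)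
    have : 2*(k+1)+1 = (2*k+1)+2 := by ring
    rw [this, h]
    simp [ih]

lemma aux_cos_pow_even (k : ℕ) :
    ∫ x in (0:ℝ)..Real.pi, Real.cos x ^ (2*k)
      = Real.pi * (Nat.factorial (2*k)) / (4^k * ((Nat.factorial k):ℝ)^2) := by
  induction k with
  | zero => simp
  | succ k ih =>
    have h := integral_cos_pow (a := 0) (b := Real.pi) (n := 2*k)
    have h2 : 2*(k+1) = (2*k)+2 := by ring
    rw [h2, h, ih]
    have hk : ((Nat.factorial k):ℝ) ≠ 0 := Nat.cast_ne_zero.mpr (Nat.factorial_ne_zero k)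
    have h3 : (2*k+2).factorial = (2*k+2) * ((2*k+1) * (2*k).factorial) := by
      rw [show 2*k+2 = (2*k+1)+1 by ring, Nat.factorial_succ, Nat.factorial_succ]
    have h4 : (k+1).factorial = (k+1) * k.factorial := Nat.factorial_succ k
    rw [h3, h4]
    push_cast
    have hne : (2*(k:ℝ)+2) ≠ 0 := by positivity
    have h4k : (4:ℝ)^k ≠ 0 := by positivity
    field_simp
    simp only [Real.sin_pi, Real.sin_zero]
    ring

lemma besselI0_eq_tsum (z : ℝ) :
    besselI0 z = ∑' k : ℕ, z^(2*k) / (4^k * ((Nat.factorial k):ℝ)^2) := by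
  have hexp : ∀ θ : ℝ, Real.exp (z * Real.cos θ)
      = ∑' n : ℕ, (z * Real.cos θ)^n / (Nat.factorial n) := by
    intro θ
    rw [Real.exp_eq_exp_ℝ, NormedSpace.exp_eq_tsum_div]
  have hbound : ∀ (n : ℕ) (θ : ℝ),
      ‖(z * Real.cos θ)^n / (Nat.factorial n : ℝ)‖ ≤ |z|^n / (Nat.factorial n) := by
    intro n θ
    rw [norm_div, norm_pow, norm_mul, Real.norm_eq_abs, Real.norm_eq_abs, Real.norm_natCast]
    have h1 : (|z| * |Real.cos θ|)^n ≤ |z|^n :=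
      pow_le_pow_left₀ (by positivity)
        (by nlinarith [abs_cos_le_one θ, abs_nonneg z, abs_nonneg (Real.cos θ)]) n
    gcongr
  have hswap : (∫ θ in Ioc (0:ℝ) Real.pi, Real.exp (z * Real.cos θ))
      = ∑' n : ℕ, ∫ θ in Ioc (0:ℝ) Real.pi, (z * Real.cos θ)^n / (Nat.factorial n) := by
    simp_rw [hexp]
    refine integral_tsum (fun n => Continuous.aestronglyMeasurable (by fun_prop)) ?_
    have hb : ∀ n : ℕ, (∫⁻ θ in Ioc (0:ℝ) Real.pi, ‖(z * Real.cos θ)^n / (Nat.factorial n : ℝ)‖₊)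
        ≤ ENNReal.ofReal ((|z|^n / (Nat.factorial n)) * Real.pi) := by
      intro n
      calc (∫⁻ θ in Ioc (0:ℝ) Real.pi, ‖(z * Real.cos θ)^n / (Nat.factorial n : ℝ)‖₊)
          ≤ ∫⁻ _ in Ioc (0:ℝ) Real.pi, ENNReal.ofReal (|z|^n / (Nat.factorial n)) := by
            refine lintegral_mono (fun θ => ?_)
            rw [← enorm_eq_nnnorm, ← ofReal_norm]
            exact ENNReal.ofReal_le_ofReal (hbound n θ)
        _ = ENNReal.ofReal (|z|^n / (Nat.factorial n)) * volume (Ioc (0:ℝ) Real.pi) :=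
            setLIntegral_const _ _
        _ = ENNReal.ofReal ((|z|^n / (Nat.factorial n)) * Real.pi) := by
            rw [Real.volume_Ioc, ENNReal.ofReal_mul (by positivity)]
            norm_num
    refine ne_top_of_le_ne_top ?_ (ENNReal.tsum_le_tsum hb)
    rw [← ENNReal.ofReal_tsum_of_nonneg (fun n => by positivity)
      ((Real.summable_pow_div_factorial |z|).mul_right Real.pi)]
    exact ENNReal.ofReal_ne_top
  have hterm : ∀ n : ℕ, (∫ θ in Ioc (0:ℝ) Real.pi, (z * Real.cos θ)^n / (Nat.factorial n))
      = z^n / (Nat.factorial n) * ∫ θ in (0:ℝ)..Real.pi, Real.cos θ ^ n := by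
    intro n
    rw [intervalIntegral.integral_of_le Real.pi_pos.le, ← integral_const_mul]
    refine setIntegral_congr_fun measurableSet_Ioc (fun θ _ => ?_)
    rw [mul_pow]
    ring
  rw [besselI0, intervalIntegral.integral_of_le Real.pi_pos.le, hswap, ← tsum_mul_left]
  have hsupp : ∀ n : ℕ, n ∉ Set.range (fun k : ℕ => 2*k) →
      (1 / Real.pi) * ∫ θ in Ioc (0:ℝ) Real.pi, (z * Real.cos θ)^n / (Nat.factorial n) = 0 := by
    intro n hn
    have hodd : Odd n := by
      rcases Nat.even_or_odd n with he | ho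
      · obtain ⟨k, hk⟩ := he
        exact absurd ⟨k, show 2*k = n by omega⟩ hn
      · exact ho
    obtain ⟨k, rfl⟩ := hodd
    rw [hterm, aux_cos_pow_odd k]
    ring
  rw [← Function.Injective.tsum_eq (g := fun k : ℕ => 2*k)
    (fun a b h => by simpa using h) (by
      intro n hn
      by_contra h
      exact hn (hsupp n h))]
  refine tsum_congr (fun k => ?_)
  show (1 / Real.pi) * ∫ θ in Ioc (0:ℝ) Real.pi, (z * Real.cos θ)^(2*k) / (Nat.factorial (2*k)) = _
  rw [hterm, aux_cos_pow_even k]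
  have hπ : Real.pi ≠ 0 := Real.pi_ne_zero
  have h1 : ((2*k).factorial : ℝ) ≠ 0 := Nat.cast_ne_zero.mpr (Nat.factorial_ne_zero _)
  have h2 : ((k).factorial : ℝ) ≠ 0 := Nat.cast_ne_zero.mpr (Nat.factorial_ne_zero _)
  have h3 : (4:ℝ)^k ≠ 0 := by positivity
  field_simp

lemma aux_int_pow_exp {p : ℝ} (hp : 0 < p) (k : ℕ) :
    IntegrableOn (fun y : ℝ => y^k * Real.exp (-(p*y))) (Ioi (0:ℝ)) ∧
    ∫ y in Ioi (0:ℝ), y^k * Real.exp (-(p*y)) = (Nat.factorial k : ℝ) / p^(k+1) := by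
  constructor
  · have h1 : IntegrableOn (fun x : ℝ => x^k * Real.exp (-x)) (Ioi (0:ℝ)) := by
      have := Real.GammaIntegral_convergent (s := (k+1:ℝ)) (by positivity)
      refine this.congr_fun (fun x hx => ?_) measurableSet_Ioi
      dsimp only
      rw [show ((k:ℝ)+1) - 1 = (k:ℝ) by ring, Real.rpow_natCast]
      ring
    have h2 : IntegrableOn (fun x : ℝ => (p*x)^k * Real.exp (-(p*x))) (Ioi (0:ℝ)) := by
      have := (integrableOn_Ioi_comp_mul_left_iff
        (fun x : ℝ => x^k * Real.exp (-x)) 0 hp).mpr (by simpa using h1)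
      simpa using this
    have h3 : IntegrableOn (fun x : ℝ => ((p:ℝ)^k)⁻¹ * ((p*x)^k * Real.exp (-(p*x))))
        (Ioi (0:ℝ)) := h2.const_mul _
    refine h3.congr_fun (fun x hx => ?_) measurableSet_Ioi
    dsimp only
    rw [mul_pow]
    field_simp
  · have h := Real.integral_rpow_mul_exp_neg_mul_Ioi (a := (k+1:ℝ)) (by positivity) hp
    rw [show ∫ y in Ioi (0:ℝ), y^k * Real.exp (-(p*y))
        = ∫ t in Ioi (0:ℝ), t ^ ((k+1:ℝ) - 1) * Real.exp (-(p*t)) from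
      setIntegral_congr_fun measurableSet_Ioi (fun x hx => by
        rw [show ((k:ℝ)+1) - 1 = (k:ℝ) by ring, Real.rpow_natCast]), h]
    rw [show (k+1:ℝ) = ((k:ℕ):ℝ) + 1 by push_cast; ring, Real.Gamma_nat_eq_factorial]
    have hpow : (1/p) ^ ((k:ℝ)+1) = (1/p)^(k+1 : ℕ) := by
      rw [← Real.rpow_natCast (1/p) (k+1)]
      norm_num
    rw [hpow, div_pow, one_pow]
    ring
lemma key_integral {p q : ℝ} (hp : 0 < p) (hq : 0 ≤ q) :
    ∫ y in Ioi (0:ℝ), Real.exp (-(p*y)) * besselI0 (2 * Real.sqrt (q*y))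
      = Real.exp (q/p) / p := by
  have hfac : ∀ k : ℕ, ((Nat.factorial k : ℝ)) ≠ 0 :=
    fun k => Nat.cast_ne_zero.mpr (Nat.factorial_ne_zero k)
  -- rewrite the integrand as a series on Ioi 0
  have hcongr : ∫ y in Ioi (0:ℝ), Real.exp (-(p*y)) * besselI0 (2 * Real.sqrt (q*y))
      = ∫ y in Ioi (0:ℝ), ∑' k : ℕ,
          Real.exp (-(p*y)) * ((q*y)^k / ((Nat.factorial k : ℝ))^2) := by
    refine setIntegral_congr_fun measurableSet_Ioi (fun y hy => ?_)
    have hy0 : (0:ℝ) ≤ y := (le_of_lt hy)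
    have hqy : (0:ℝ) ≤ q * y := mul_nonneg hq hy0
    rw [besselI0_eq_tsum, ← tsum_mul_left]
    refine tsum_congr (fun k => ?_)
    have h1 : (2 * Real.sqrt (q*y))^(2*k) = 4^k * (q*y)^k := by
      rw [pow_mul, mul_pow, Real.sq_sqrt hqy, ← mul_pow]
      norm_num
    rw [h1]
    have h4 : (4:ℝ)^k ≠ 0 := by positivity
    field_simp
  rw [hcongr]
  -- per-term data
  have hint : ∀ k : ℕ, IntegrableOn
      (fun y : ℝ => Real.exp (-(p*y)) * ((q*y)^k / ((Nat.factorial k : ℝ))^2))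
      (Ioi (0:ℝ)) := by
    intro k
    have h : IntegrableOn (fun y : ℝ =>
        (q^k / ((Nat.factorial k : ℝ))^2) * (y^k * Real.exp (-(p*y)))) (Ioi (0:ℝ)) :=
      (aux_int_pow_exp hp k).1.const_mul _
    refine h.congr_fun (fun y hy => ?_) measurableSet_Ioi
    rw [mul_pow]
    ring
  have hval : ∀ k : ℕ, (∫ y in Ioi (0:ℝ),
        Real.exp (-(p*y)) * ((q*y)^k / ((Nat.factorial k : ℝ))^2))
      = (q/p)^k / (Nat.factorial k) * (1/p) := by
    intro k
    have h : (∫ y in Ioi (0:ℝ),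
          Real.exp (-(p*y)) * ((q*y)^k / ((Nat.factorial k : ℝ))^2))
        = (q^k / ((Nat.factorial k : ℝ))^2) * ∫ y in Ioi (0:ℝ), y^k * Real.exp (-(p*y)) := by
      rw [← integral_const_mul]
      refine setIntegral_congr_fun measurableSet_Ioi (fun y hy => ?_)
      rw [mul_pow]
      ring
    rw [h, (aux_int_pow_exp hp k).2, div_pow]
    have hpk : (p:ℝ)^k ≠ 0 := by positivity
    field_simp
    ring
  have hnn : ∀ k : ℕ, ∀ y ∈ Ioi (0:ℝ),
      0 ≤ Real.exp (-(p*y)) * ((q*y)^k / ((Nat.factorial k : ℝ))^2) := by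
    intro k y hy
    have : (0:ℝ) ≤ q * y := mul_nonneg hq (le_of_lt hy)
    positivity
  -- swap integral and sum
  rw [integral_tsum (fun k => Continuous.aestronglyMeasurable (by fun_prop)) ?_]
  · simp_rw [hval]
    rw [tsum_mul_right]
    have : ∑' k : ℕ, (q/p)^k / (Nat.factorial k : ℝ) = Real.exp (q/p) := by
      rw [Real.exp_eq_exp_ℝ, NormedSpace.exp_eq_tsum_div]
    rw [this]
    ring
  · have hlin : ∀ k : ℕ, (∫⁻ y in Ioi (0:ℝ),
        ‖Real.exp (-(p*y)) * ((q*y)^k / ((Nat.factorial k : ℝ))^2)‖₊)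
        = ENNReal.ofReal ((q/p)^k / (Nat.factorial k) * (1/p)) := by
      intro k
      rw [← hval k, ofReal_integral_eq_lintegral_ofReal (hint k)
        ((ae_restrict_iff' measurableSet_Ioi).mpr (Filter.Eventually.of_forall (hnn k)))]
      refine lintegral_congr_ae ?_
      filter_upwards [ae_restrict_mem measurableSet_Ioi] with y hy
      simp only [← Real.enorm_eq_ofReal (hnn k y hy), enorm_eq_nnnorm]
    simp_rw [enorm_eq_nnnorm, hlin]
    have hsummand : ∀ k : ℕ, 0 ≤ (q/p)^k / (Nat.factorial k : ℝ) * (1/p) :=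
      fun k => mul_nonneg (div_nonneg (pow_nonneg (div_nonneg hq hp.le) k)
        (Nat.cast_nonneg _)) (by positivity)
    rw [← ENNReal.ofReal_tsum_of_nonneg hsummand
      ((Real.summable_pow_div_factorial (q/p)).mul_right (1/p))]
    exact ENNReal.ofReal_ne_top

/-- Marginalization over outdated CSI: if, conditional on `Y = y`, `X` has the
noncentral-exponential density
`f(x|y) = (1/((1-ρ²)γ)) e^{-(x+ρ²y)/((1-ρ²)γ)} I₀(2ρ√(xy)/((1-ρ²)γ))`
and `Y` has density `Ψ e^{-Φ y}`, then the marginal density of `X` is `Ξ e^{-Z x}` with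
`Ξ = Ψ/((1-ρ²)γ(Φ + ρ²/((1-ρ²)γ)))` and
`Z = 1/((1-ρ²)γ) - ρ²/((1-ρ²)²γ²(Φ + ρ²/((1-ρ²)γ)))`. -/
theorem marginal_density_outdated_csi
    {ρ γ Ψ Φ : ℝ} (hρ0 : 0 ≤ ρ) (hρ1 : ρ < 1) (hγ : 0 < γ) (hΨ : 0 < Ψ) (hΦ : 0 < Φ)
    (f : ℝ → ℝ → ℝ)
    (hf : ∀ x y, f x y = (1 / ((1 - ρ ^ 2) * γ)) *
        Real.exp (-(x + ρ ^ 2 * y) / ((1 - ρ ^ 2) * γ)) *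
        besselI0 (2 * ρ * Real.sqrt (x * y) / ((1 - ρ ^ 2) * γ)))
    (Ξ Z : ℝ)
    (hΞ : Ξ = Ψ / ((1 - ρ ^ 2) * γ * (Φ + ρ ^ 2 / ((1 - ρ ^ 2) * γ))))
    (hZ : Z = 1 / ((1 - ρ ^ 2) * γ)
        - ρ ^ 2 / ((1 - ρ ^ 2) ^ 2 * γ ^ 2 * (Φ + ρ ^ 2 / ((1 - ρ ^ 2) * γ)))) :
    ∀ x : ℝ, 0 ≤ x →
      (∫ y in Ioi (0 : ℝ), f x y * (Ψ * Real.exp (-Φ * y))) = Ξ * Real.exp (-Z * x) := by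
  intro x hx
  have hρ2 : ρ^2 < 1 := by nlinarith
  set A : ℝ := (1 - ρ^2) * γ with hAdef
  have hA : 0 < A := mul_pos (by nlinarith) hγ
  set P : ℝ := Φ + ρ^2/A with hPdef
  have hP : 0 < P := add_pos_of_pos_of_nonneg hΦ (div_nonneg (sq_nonneg ρ) hA.le)
  set Q : ℝ := ρ^2 * x / A^2 with hQdef
  have hQ : 0 ≤ Q := div_nonneg (mul_nonneg (sq_nonneg ρ) hx) (by positivity)
  have hcong : ∀ y ∈ Ioi (0:ℝ), f x y * (Ψ * Real.exp (-Φ * y))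
      = (Ψ/A * Real.exp (-x/A)) *
        (Real.exp (-(P*y)) * besselI0 (2 * Real.sqrt (Q*y))) := by
    intro y hy
    have hy0 : (0:ℝ) ≤ y := le_of_lt hy
    rw [hf x y]
    have harg : 2 * ρ * Real.sqrt (x*y) / A = 2 * Real.sqrt (Q*y) := by
      have hs : Real.sqrt (x*y)^2 = x*y := Real.sq_sqrt (mul_nonneg hx hy0)
      have h1 : Q*y = (ρ * Real.sqrt (x*y) / A)^2 := by
        rw [div_pow, mul_pow, hs, hQdef]
        ring
      rw [h1, Real.sqrt_sq (div_nonneg (mul_nonneg hρ0 (Real.sqrt_nonneg _)) hA.le)]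
      ring
    have hexp1 : Real.exp (-(x + ρ^2*y)/A) * Real.exp (-Φ*y)
        = Real.exp (-x/A) * Real.exp (-(P*y)) := by
      rw [← Real.exp_add, ← Real.exp_add]
      congr 1
      rw [hPdef]
      field_simp
      ring
    rw [harg]
    linear_combination (Ψ / A * besselI0 (2 * Real.sqrt (Q*y))) * hexp1
  rw [setIntegral_congr_fun measurableSet_Ioi hcong, integral_const_mul,
    key_integral hP hQ, hΞ, hZ]
  have hne1 : (1 - ρ^2 : ℝ) ≠ 0 := by nlinarith
  have hexp2 : Real.exp (-(1/A - ρ^2/((1-ρ^2)^2 * γ^2 * P)) * x)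
      = Real.exp (-x/A) * Real.exp (Q/P) := by
    rw [← Real.exp_add]
    congr 1
    rw [hQdef, hPdef, hAdef]
    have hP' : Φ + ρ^2/((1-ρ^2)*γ) ≠ 0 := by
      rw [← hAdef, ← hPdef]; exact hP.ne'
    field_simp
    ring
  rw [hexp2]
  field_simp
end

section
/- Fix constants E_S, E_R, Ẽ_H, E_T, Pr_R, W, T, T_R > 0 and Δ ∈ (0,1). The function g(T_S) = E_S W T_S² + E_R T_R W T_S + (Δ^{T_S W} Pr_R E_T − Ẽ_H (1 − Δ^{T_S W}))(T − T_S) is convex on [0, T]; specifically g''(T_S) = 2 E_S W − Δ^{T_S W}(Ẽ_H + E_T Pr_R) W ln(Δ)(2 − (T − T_S) W ln(Δ)) ≥ 0. -/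
open Real Set

/-- Convexity of the average energy-consumption objective in the sensing time `T_S`:
`g(T_S) = E_S W T_S² + E_R T_R W T_S + (Δ^{T_S W} Pr_R E_T − Ẽ_H(1 − Δ^{T_S W}))(T − T_S)`
is convex on `[0,T]`, with
`g''(T_S) = 2E_S W − Δ^{T_S W}(Ẽ_H + E_T Pr_R) W ln Δ (2 − (T − T_S) W ln Δ) ≥ 0`. -/
theorem energy_objective_convex
    {ES ER EH ET PrR W T TR Δ : ℝ}
    (hES : 0 < ES) (hER : 0 < ER) (hEH : 0 < EH) (hET : 0 < ET) (hPrR : 0 < PrR)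
    (hW : 0 < W) (hT : 0 < T) (hTR : 0 < TR) (hΔ0 : 0 < Δ) (hΔ1 : Δ < 1)
    (g : ℝ → ℝ)
    (hg : ∀ TS : ℝ, g TS = ES * W * TS ^ 2 + ER * TR * W * TS +
        (Δ ^ (TS * W) * PrR * ET - EH * (1 - Δ ^ (TS * W))) * (T - TS)) :
    ConvexOn ℝ (Icc 0 T) g
    ∧ ∀ TS ∈ Icc (0 : ℝ) T,
        iteratedDeriv 2 g TS
          = 2 * ES * W - Δ ^ (TS * W) * (EH + ET * PrR) * W * Real.log Δ *
              (2 - (T - TS) * W * Real.log Δ)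
        ∧ 0 ≤ iteratedDeriv 2 g TS := by
  set c : ℝ := W * Real.log Δ with hcdef
  set A : ℝ := EH + ET * PrR with hAdef
  have hcneg : c ≤ 0 := by
    have hlog : Real.log Δ < 0 := Real.log_neg hΔ0 hΔ1
    exact le_of_lt (mul_neg_of_pos_of_neg hW hlog)
  have hApos : 0 < A := by positivity
  have hexp : ∀ x : ℝ, Δ ^ (x * W) = Real.exp (c * x) := by
    intro x
    rw [Real.rpow_def_of_pos hΔ0]
    exact congrArg Real.exp (by rw [hcdef]; ring)
  -- closed form
  have hg2 : g = fun x => ES * W * x ^ 2 + ER * TR * W * x +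
      (A * Real.exp (c * x) - EH) * (T - x) := by
    funext x
    rw [hg, hexp, hAdef]; ring
  -- derivative of exp(c*x)
  have hE : ∀ x : ℝ, HasDerivAt (fun x => Real.exp (c * x)) (c * Real.exp (c * x)) x := by
    intro x
    have h := ((hasDerivAt_id x).const_mul c).exp
    simpa [mul_comm] using h
  -- first derivative
  set g1 : ℝ → ℝ := fun x => 2 * ES * W * x + ER * TR * W +
      A * c * Real.exp (c * x) * (T - x) - (A * Real.exp (c * x) - EH) with hg1def
  have h1 : ∀ x : ℝ, HasDerivAt g (g1 x) x := by
    intro x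
    rw [hg2]
    have p1 : HasDerivAt (fun x : ℝ => ES * W * x ^ 2) (ES * W * (2 * x)) x := by
      simpa using (hasDerivAt_pow 2 x).const_mul (ES * W)
    have p2 : HasDerivAt (fun x : ℝ => ER * TR * W * x) (ER * TR * W) x := by
      simpa using (hasDerivAt_id x).const_mul (ER * TR * W)
    have p3 : HasDerivAt (fun x : ℝ => (A * Real.exp (c * x) - EH) * (T - x))
        ((A * (c * Real.exp (c * x))) * (T - x) + (A * Real.exp (c * x) - EH) * (-1)) x := by
      exact (((hE x).const_mul A).sub_const EH).mul ((hasDerivAt_id x).const_sub T)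
    have := (p1.add p2).add p3
    refine this.congr_deriv ?_
    rw [hg1def]; ring
  -- second derivative
  set g2 : ℝ → ℝ := fun x =>
      2 * ES * W - A * c * Real.exp (c * x) * (2 - c * (T - x)) with hg2def
  have h2 : ∀ x : ℝ, HasDerivAt g1 (g2 x) x := by
    intro x
    rw [hg1def]
    have p1 : HasDerivAt (fun x : ℝ => 2 * ES * W * x) (2 * ES * W) x := by
      simpa using (hasDerivAt_id x).const_mul (2 * ES * W)
    have p3 : HasDerivAt (fun x : ℝ => A * c * Real.exp (c * x) * (T - x))
        ((A * c * (c * Real.exp (c * x))) * (T - x) + A * c * Real.exp (c * x) * (-1)) x :=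
      ((hE x).const_mul (A * c)).mul ((hasDerivAt_id x).const_sub T)
    have p4 : HasDerivAt (fun x : ℝ => A * Real.exp (c * x) - EH)
        (A * (c * Real.exp (c * x))) x := ((hE x).const_mul A).sub_const EH
    have := ((p1.add_const (ER * TR * W)).add p3).sub p4
    refine this.congr_deriv ?_
    rw [hg2def]; ring
  have hd1 : deriv g = g1 := funext fun x => (h1 x).deriv
  have hd2 : deriv (deriv g) = g2 := by rw [hd1]; exact funext fun x => (h2 x).deriv
  have hiter : ∀ x : ℝ, iteratedDeriv 2 g x = g2 x := by
    intro x
    rw [show (2 : ℕ) = 1 + 1 from rfl, iteratedDeriv_succ, iteratedDeriv_one, hd2]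
  have hnonneg : ∀ x : ℝ, x ≤ T → 0 ≤ g2 x := by
    intro x hx
    simp only [hg2def]
    have hepos : 0 < Real.exp (c * x) := Real.exp_pos _
    have h5 : A * c * Real.exp (c * x) ≤ 0 := by
      have : A * c ≤ 0 := mul_nonpos_of_nonneg_of_nonpos hApos.le hcneg
      exact mul_nonpos_of_nonpos_of_nonneg this hepos.le
    have h6 : (0 : ℝ) ≤ 2 - c * (T - x) := by
      have : c * (T - x) ≤ 0 :=
        mul_nonpos_of_nonpos_of_nonneg hcneg (by linarith)
      linarith
    have h7 : A * c * Real.exp (c * x) * (2 - c * (T - x)) ≤ 0 :=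
      mul_nonpos_of_nonpos_of_nonneg h5 h6
    have : 0 < 2 * ES * W := by positivity
    linarith
  constructor
  · apply convexOn_of_deriv2_nonneg (convex_Icc 0 T)
    · exact fun x _ => ((h1 x).continuousAt).continuousWithinAt
    · exact fun x _ => ((h1 x).differentiableAt).differentiableWithinAt
    · intro x _
      rw [hd1]
      exact ((h2 x).differentiableAt).differentiableWithinAt
    · intro x hx
      have hx' : x ∈ Icc 0 T := interior_subset hx
      have : deriv^[2] g x = g2 x := by
        simp only [Function.iterate_succ, Function.iterate_zero, Function.comp,
          id_eq]
        rw [hd2]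
      rw [this]
      exact hnonneg x hx'.2
  · intro TS hTS
    have heq : iteratedDeriv 2 g TS
        = 2 * ES * W - Δ ^ (TS * W) * (EH + ET * PrR) * W * Real.log Δ *
            (2 - (T - TS) * W * Real.log Δ) := by
      rw [hiter, hg2def, hexp, hAdef, hcdef]; ring
    refine ⟨heq, ?_⟩
    rw [hiter]
    exact hnonneg TS hTS.2
end
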